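/- Let G be a finite connected weighted graph such that the edge lengths within each maximal 2-connected component of G are linearly independent over ℚ. Then J(G) is a free abelian group of rank #V(G) − #Br(G) − 1, where Br(G) is the set of bridges of G. -/

import Mathlib

/-- A finite weighted (multi)graph with a fixed orientation of the edges:
vertex type `V`, edge type `E`, tail/head maps and a positive length function. -/
structure WGraph where
  V : Type
  E : Type
  [fV : Fintype V]
  [fE : Fintype E]
  [dV : DecidableEq V]
  [dE : DecidableEq E]
  tail : E → V
  head : E → V
  len : E → ℝ
  len_pos : ∀ e, 0 < len e

attribute [instance] WGraph.fV WGraph.fE WGraph.dV WGraph.dE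

namespace WGraph

variable (G : WGraph)

/-- Two vertices are adjacent if some edge joins them (in either direction). -/
def Adj (x y : G.V) : Prop :=
  ∃ e, (G.tail e = x ∧ G.head e = y) ∨ (G.tail e = y ∧ G.head e = x)

/-- A weighted graph is connected if any two vertices are joined by a walk. -/
def Connected : Prop := ∀ x y : G.V, Relation.ReflTransGen G.Adj x y

/-- The differential `d : C_0(G,ℝ) → C_1(G,ℝ)`, `(df)(e) = (f(e⁺) - f(e⁻))/ℓ(e)`. -/
noncomputable def d (f : G.V → ℝ) : G.E → ℝ :=
  fun e => (f (G.head e) - f (G.tail e)) / G.len e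

/-- The adjoint `d* : C_1(G,ℝ) → C_0(G,ℝ)`,
`(d*α)(x) = Σ_{e⁺ = x} α(e) - Σ_{e⁻ = x} α(e)`. -/
def dStar (α : G.E → ℝ) : G.V → ℝ := fun x =>
  (∑ e ∈ Finset.univ.filter fun e => G.head e = x, α e) -
    ∑ e ∈ Finset.univ.filter fun e => G.tail e = x, α e

/-- The inner product `⟨α,β⟩ = Σ_e α(e) β(e) ℓ(e)` on real 1-chains. -/
noncomputable def ip (α β : G.E → ℝ) : ℝ := ∑ e, α e * β e * G.len e

/-- Real 1-cycles: the kernel of `d*`. -/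
def IsCycle (α : G.E → ℝ) : Prop := ∀ x, G.dStar α x = 0

/-- Exact 1-chains: the image of `d`. -/
def IsExact (α : G.E → ℝ) : Prop := ∃ f : G.V → ℝ, α = G.d f

/-- A 1-form `ω = Σ ω_e de` (recorded by its coefficients) is harmonic if at every
vertex the incoming and outgoing coefficients sum to the same value. -/
def Harmonic (ω : G.E → ℝ) : Prop :=
  ∀ x, (∑ e ∈ Finset.univ.filter fun e => G.head e = x, ω e) =
    ∑ e ∈ Finset.univ.filter fun e => G.tail e = x, ω e

/-- Integration of the 1-form `ω` along the 1-chain `α`: `∫_α ω = Σ_e ω_e α(e) ℓ(e)`. -/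
noncomputable def intPair (ω α : G.E → ℝ) : ℝ := ∑ e, ω e * α e * G.len e

/-- `d*` on integral 1-chains. -/
def dStarZ (α : G.E → ℤ) : G.V → ℤ := fun x =>
  (∑ e ∈ Finset.univ.filter fun e => G.head e = x, α e) -
    ∑ e ∈ Finset.univ.filter fun e => G.tail e = x, α e

/-- Integral 1-cycles. -/
def IsCycleZ (α : G.E → ℤ) : Prop := ∀ x, G.dStarZ α x = 0

/-- `α ∈ im(d)_ℤ`: `α` is an integral 1-chain which is the differential of a real
function on the vertices (a function with integer slopes). -/
def IsExactZ (α : G.E → ℤ) : Prop :=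
  ∃ f : G.V → ℝ, ∀ e, (α e : ℝ) = G.d f e

/-- The subgroup `H_1(G,ℤ) ⊕ im(d)_ℤ` of `C_1(G,ℤ)`, i.e. the subgroup generated by
integral cycles together with integral exact chains. -/
def jacRel : AddSubgroup (G.E → ℤ) :=
  AddSubgroup.closure {α | G.IsCycleZ α ∨ G.IsExactZ α}

/-- The Jacobian group of a weighted graph: `J(G) = C_1(G,ℤ)/(H_1(G,ℤ) ⊕ im(d)_ℤ)`. -/
def Jac := (G.E → ℤ) ⧸ G.jacRel

noncomputable instance : AddCommGroup G.Jac :=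
  inferInstanceAs (AddCommGroup ((G.E → ℤ) ⧸ G.jacRel))

/-- Divisors of degree zero. -/
def Div0 : AddSubgroup (G.V → ℤ) where
  carrier := {D | ∑ x, D x = 0}
  add_mem' := by
    intro a b ha hb
    simp only [Set.mem_setOf_eq] at *
    simp [Finset.sum_add_distrib, ha, hb]
  zero_mem' := by simp
  neg_mem' := by
    intro a ha
    simp only [Set.mem_setOf_eq] at *
    simp [ha]

/-- `d*` as a group homomorphism on integral 1-chains. -/
def dStarZHom : (G.E → ℤ) →+ (G.V → ℤ) where
  toFun := G.dStarZ
  map_zero' := by funext x; simp [dStarZ]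
  map_add' := by
    intro a b
    funext x
    simp [dStarZ, Finset.sum_add_distrib]
    ring

/-- The subgroup `im(d)_ℤ` of `C_1(G,ℤ)`. -/
def imdZ : AddSubgroup (G.E → ℤ) where
  carrier := {α | G.IsExactZ α}
  add_mem' := by
    rintro a b ⟨f, hf⟩ ⟨g, hg⟩
    exact ⟨f + g, fun e => by
      simp only [Pi.add_apply, Int.cast_add, hf e, hg e, d]; ring⟩
  zero_mem' := ⟨0, fun e => by simp [d]⟩
  neg_mem' := by
    rintro a ⟨f, hf⟩
    exact ⟨-f, fun e => by
      simp only [Pi.neg_apply, Int.cast_neg, hf e, d]; ring⟩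

/-- Principal divisors: `Prin(G) = d*(im(d)_ℤ)`. -/
def Prin : AddSubgroup (G.V → ℤ) := G.imdZ.map G.dStarZHom

lemma sum_dStarZ (α : G.E → ℤ) : ∑ x, G.dStarZ α x = 0 := by
  simp only [dStarZ, Finset.sum_sub_distrib]
  rw [Finset.sum_fiberwise, Finset.sum_fiberwise]
  simp

/-- The degree-zero Picard group `Pic(G) = Div⁰(G)/Prin(G)`. -/
def PicZ := G.Div0 ⧸ (G.Prin.addSubgroupOf G.Div0)

noncomputable instance : AddCommGroup G.PicZ :=
  inferInstanceAs (AddCommGroup (G.Div0 ⧸ (G.Prin.addSubgroupOf G.Div0)))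

/-- The weighted graph obtained by deleting the edge `e₀`. -/
def delEdge (e₀ : G.E) : WGraph where
  V := G.V
  E := {e : G.E // e ≠ e₀}
  tail := fun e => G.tail e.1
  head := fun e => G.head e.1
  len := fun e => G.len e.1
  len_pos := fun e => G.len_pos e.1

/-- An edge is a bridge if deleting it disconnects the graph. -/
def IsBridge (e₀ : G.E) : Prop := ¬ (G.delEdge e₀).Connected

/-- The weighted graph obtained by deleting a vertex `z` (and all incident edges). -/
def delVertex (z : G.V) : WGraph where
  V := {x : G.V // x ≠ z}
  E := {e : G.E // G.tail e ≠ z ∧ G.head e ≠ z}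
  tail := fun e => ⟨G.tail e.1, e.2.1⟩
  head := fun e => ⟨G.head e.1, e.2.2⟩
  len := fun e => G.len e.1
  len_pos := fun e => G.len_pos e.1

open scoped Classical in
/-- The (discrete) potential kernel: `jKer z y` is the function `f` with `f(z) = 0`
and `Δf = δ_y - δ_z` (when such a function exists; it is unique on a
connected graph). -/
noncomputable def jKer (z y : G.V) : G.V → ℝ :=
  if h : ∃ f : G.V → ℝ, f z = 0 ∧ ∀ w, G.dStar (G.d f) w =
      (if w = y then 1 else 0) - (if w = z then 1 else 0)
  then h.choose else 0

/-- Connectivity using only the edges in `S`. -/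
def ConnectedOn (S : Finset G.E) : Prop :=
  ∀ x y : G.V, Relation.ReflTransGen
    (fun a b => ∃ e ∈ S, (G.tail e = a ∧ G.head e = b) ∨ (G.tail e = b ∧ G.head e = a)) x y

/-- A spanning tree: a spanning connected edge set with `#V - 1` edges. -/
def IsSpanningTree (T : Finset G.E) : Prop :=
  G.ConnectedOn T ∧ T.card + 1 = Fintype.card G.V

/-- The weight `w(T) = Π_{e ∉ T} ℓ(e)` of a spanning tree. -/
noncomputable def wt (T : Finset G.E) : ℝ := ∏ e ∈ Finset.univ \ T, G.len e

open scoped Classical in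
/-- `w(G) = Σ_T w(T)`, summed over all spanning trees. -/
noncomputable def wG : ℝ := ∑ T : Finset G.E, if G.IsSpanningTree T then G.wt T else 0

open scoped Classical in
/-- The Foster coefficient `F(e) = (1/w(G)) Σ_{T : e ∉ T} w(T)`. -/
noncomputable def foster (e : G.E) : ℝ :=
  (1 / G.wG) * ∑ T : Finset G.E, if G.IsSpanningTree T ∧ e ∉ T then G.wt T else 0

open scoped Classical in
/-- The fundamental cycle `α_{T,e}`: the unique 1-cycle supported on `T ∪ {e}` taking
the value `1` on `e`; by convention it is `0` when no such cycle exists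
(e.g. when `e ∈ T`). -/
noncomputable def fundCycle (T : Finset G.E) (e : G.E) : G.E → ℝ :=
  if h : ∃ α : G.E → ℝ, G.IsCycle α ∧ α e = 1 ∧ ∀ f, f ∉ T → f ≠ e → α f = 0
  then h.choose else 0

end WGraph

namespace WGraph

/-- A circuit in `G`: a closed walk `x 0, ed 0, x 1, …, ed (n-1), x n = x 0` with
`n ≥ 1`, pairwise distinct edges and pairwise distinct vertices (except for the
coincidence `x 0 = x n`), each edge joining consecutive vertices in one of the two
possible directions. -/
def IsCircuit (G : WGraph) {n : ℕ} (x : Fin (n + 1) → G.V) (ed : Fin n → G.E) : Prop :=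
  0 < n ∧ Function.Injective ed ∧ x 0 = x (Fin.last n) ∧
  (∀ i j : Fin (n + 1), x i = x j →
    i = j ∨ (i = 0 ∧ j = Fin.last n) ∨ (i = Fin.last n ∧ j = 0)) ∧
  ∀ i : Fin n, (G.tail (ed i) = x i.castSucc ∧ G.head (ed i) = x i.succ) ∨
    (G.tail (ed i) = x i.succ ∧ G.head (ed i) = x i.castSucc)

end WGraph

namespace WGraph

/-- Two edges lie on a common circuit of `G`. -/
def OnCommonCircuit (G : WGraph) (e f : G.E) : Prop :=
  ∃ (n : ℕ) (x : Fin (n + 1) → G.V) (ed : Fin n → G.E),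
    G.IsCircuit x ed ∧ (∃ i, ed i = e) ∧ ∃ i, ed i = f

end WGraph

namespace WGraphAux

open WGraph

variable (G : WGraph)

/-- `e` joins `a` and `b` (in either direction). -/
def Joins (e : G.E) (a b : G.V) : Prop :=
  (G.tail e = a ∧ G.head e = b) ∨ (G.tail e = b ∧ G.head e = a)

lemma Joins.symm {G : WGraph} {e : G.E} {a b : G.V} (h : Joins G e a b) : Joins G e b a :=
  h.elim Or.inr Or.inl

/-- A walk avoiding `e₀`, with `n` edges, indexed by naturals. -/
def Walk (e₀ : G.E) (n : ℕ) (x : ℕ → G.V) (ed : ℕ → G.E) : Prop :=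
  ∀ i, i < n → ed i ≠ e₀ ∧ Joins G (ed i) (x i) (x (i + 1))

lemma walk_of_rtg {G : WGraph} {e₀ : G.E} {a b : G.V}
    (h : Relation.ReflTransGen (fun u v => ∃ e, e ≠ e₀ ∧ Joins G e u v) a b) :
    ∃ n x ed, Walk G e₀ n x ed ∧ x 0 = a ∧ x n = b := by
  induction h with
  | refl => exact ⟨0, fun _ => a, fun _ => e₀, fun i hi => absurd hi (Nat.not_lt_zero i), rfl, rfl⟩
  | @tail c y hac hcy ih =>
    obtain ⟨n, x, ed, hw, hx0, hxn⟩ := ih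
    obtain ⟨e, hne, hj⟩ := hcy
    refine ⟨n + 1, fun i => if i = n + 1 then y else x i,
      fun i => if i = n then e else ed i, ?_, ?_, ?_⟩
    · intro i hi
      rcases Nat.lt_or_ge i n with h1 | h1
      · have hi1 : i ≠ n := Nat.ne_of_lt h1
        have hi2 : i ≠ n + 1 := by omega
        have hi3 : i + 1 ≠ n + 1 := by omega
        simpa [hi1, hi2, hi3] using hw i h1
      · have hi1 : i = n := by omega
        subst hi1
        have h2 : i ≠ i + 1 := by omega
        simpa [h2, hxn] using ⟨hne, hj⟩
    · have : (0 : ℕ) ≠ n + 1 := by omega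
      simpa [this]
    · simp

/-- Any walk between two points can be replaced by one with injective vertices. -/
lemma simple_walk_of_walk {G : WGraph} {e₀ : G.E} {a b : G.V} :
    ∀ n, ∀ x ed, Walk G e₀ n x ed → x 0 = a → x n = b →
    ∃ m y fd, Walk G e₀ m y fd ∧ y 0 = a ∧ y m = b ∧
      (∀ i ≤ m, ∀ j ≤ m, y i = y j → i = j) := by
  intro n
  induction n using Nat.strong_induction_on with
  | _ n IH =>
    intro x ed hw hx0 hxn
    by_cases hinj : ∀ i ≤ n, ∀ j ≤ n, x i = x j → i = j
    · exact ⟨n, x, ed, hw, hx0, hxn, hinj⟩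
    · push_neg at hinj
      obtain ⟨i, hi, j, hj, hxij, hij⟩ := hinj
      -- wlog i < j
      obtain ⟨i, j, hi, hj, hxij, hij⟩ : ∃ i j, i ≤ n ∧ j ≤ n ∧ x i = x j ∧ i < j := by
        rcases Nat.lt_or_ge i j with h | h
        · exact ⟨i, j, hi, hj, hxij, h⟩
        · exact ⟨j, i, hj, hi, hxij.symm, by omega⟩
      set m : ℕ := n - (j - i) with hm
      have hmn : m < n := by omega
      have key : m + (j - i) = n := by omega
      refine IH m hmn (fun k => if k ≤ i then x k else x (k + (j - i)))
        (fun k => if k < i then ed k else ed (k + (j - i))) ?_ ?_ ?_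
      · intro k hk
        rcases Nat.lt_or_ge k i with h1 | h1
        · have h2 : k ≤ i := by omega
          have h3 : k + 1 ≤ i := by omega
          simpa [h1, h2, h3] using hw k (by omega)
        · have h2 : ¬ (k < i) := by omega
          have h3 : ¬ (k + 1 ≤ i) := by omega
          have h5 : k + (j - i) < n := by omega
          have h6 := hw (k + (j - i)) h5
          have h7 : k + (j - i) + 1 = k + 1 + (j - i) := by omega
          rw [h7] at h6
          have hxk : (if k ≤ i then x k else x (k + (j - i))) = x (k + (j - i)) := by
            split_ifs with h
            · have : k = i := by omega
              subst this
              rw [hxij]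
              congr 1
              omega
            · rfl
          beta_reduce
          rw [if_neg h2, if_neg h3, hxk]
          exact h6
      · simp [Nat.zero_le, hx0]
      · beta_reduce
        by_cases h : m ≤ i
        · have him : i = m := by omega
          have hji : j = n := by omega
          rw [if_pos h, ← him, hxij, hji, hxn]
        · rw [if_neg h, key, hxn]

lemma walk_edge_inj {G : WGraph} {e₀ : G.E} {n : ℕ} {x : ℕ → G.V} {ed : ℕ → G.E}
    (hw : Walk G e₀ n x ed) (hinj : ∀ i ≤ n, ∀ j ≤ n, x i = x j → i = j) :
    ∀ i, i < n → ∀ j, j < n → ed i = ed j → i = j := by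
  intro i hi j hj he
  have h1 := (hw i hi).2
  have h2 := (hw j hj).2
  rw [he] at h1
  rcases h1 with ⟨t1, u1⟩ | ⟨t1, u1⟩ <;> rcases h2 with ⟨t2, u2⟩ | ⟨t2, u2⟩
  · exact hinj i (by omega) j (by omega) (t1.symm.trans t2)
  · have a1 : i = j + 1 := hinj i (by omega) (j+1) (by omega) (t1.symm.trans t2)
    have a2 : i + 1 = j := hinj (i+1) (by omega) j (by omega) (u1.symm.trans u2)
    omega
  · have a1 : i + 1 = j := hinj (i+1) (by omega) j (by omega) (t1.symm.trans t2)
    have a2 : i = j + 1 := hinj i (by omega) (j+1) (by omega) (u1.symm.trans u2)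
    omega
  · have a1 : i + 1 = j + 1 := hinj (i+1) (by omega) (j+1) (by omega) (t1.symm.trans t2)
    omega

lemma exists_circuit {G : WGraph} {e₀ : G.E} (hnb : ¬ G.IsBridge e₀) :
    ∃ (N : ℕ) (X : Fin (N + 1) → G.V) (ED : Fin N → G.E),
      G.IsCircuit X ED ∧ ∃ k : Fin N, ED k = e₀ := by
  have hc : (G.delEdge e₀).Connected := not_not.mp hnb
  have hreach : Relation.ReflTransGen (fun u v => ∃ e, e ≠ e₀ ∧ Joins G e u v)
      (G.head e₀) (G.tail e₀) := by
    refine Relation.ReflTransGen.mono ?_ _ _ (hc (G.head e₀) (G.tail e₀))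
    rintro u v ⟨e, h⟩
    exact ⟨e.1, e.2, h⟩
  by_cases he : G.head e₀ = G.tail e₀
  · -- loop case
    refine ⟨1, fun _ => G.tail e₀, fun _ => e₀, ⟨one_pos, ?_, rfl, ?_, ?_⟩, ⟨0, rfl⟩⟩
    · intro a b _; exact Subsingleton.elim a b
    · intro i j _
      fin_cases i <;> fin_cases j <;> simp [Fin.last]
    · intro i; exact Or.inl ⟨rfl, he⟩
  · obtain ⟨n0, x0, ed0, hw0, hx00, hxn0⟩ := walk_of_rtg hreach
    obtain ⟨n, x, ed, hw, hx0, hxn, hinj⟩ :=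
      simple_walk_of_walk n0 x0 ed0 hw0 hx00 hxn0
    have hn : 0 < n := by
      rcases Nat.eq_zero_or_pos n with h | h
      · exfalso; apply he; rw [← hx0, ← hxn, h]
      · exact h
    refine ⟨n + 1, fun k => if k.val = 0 then G.tail e₀ else x (k.val - 1),
      fun k => if k.val = 0 then e₀ else ed (k.val - 1), ⟨by omega, ?_, ?_, ?_, ?_⟩,
      ⟨⟨0, by omega⟩, if_pos rfl⟩⟩
    · -- edge injectivity
      intro k l h
      simp only at h
      by_cases hk : k.val = 0 <;> by_cases hl : l.val = 0
      · exact Fin.ext (by omega)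
      · rw [if_pos hk, if_neg hl] at h
        exact absurd h.symm (hw (l.val - 1) (by omega)).1
      · rw [if_neg hk, if_pos hl] at h
        exact absurd h (hw (k.val - 1) (by omega)).1
      · rw [if_neg hk, if_neg hl] at h
        have := walk_edge_inj hw hinj (k.val - 1) (by omega) (l.val - 1) (by omega) h
        exact Fin.ext (by omega)
    · -- closedness
      have h1 : (0 : Fin (n + 2)).val = 0 := rfl
      have h2 : (Fin.last (n + 1)).val = n + 1 := Fin.val_last _
      simp only [h1, h2, if_pos rfl, if_true]
      rw [if_neg (by omega : ¬ (n + 1 = 0))]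
      rw [show n + 1 - 1 = n by omega, hxn]
    · -- vertex injectivity
      intro i j hxij
      simp only at hxij
      by_cases hi : i.val = 0 <;> by_cases hj : j.val = 0
      · exact Or.inl (Fin.ext (by omega))
      · rw [if_pos hi, if_neg hj] at hxij
        have h1 : x n = x (j.val - 1) := by rw [hxn, hxij]
        have h2 := hinj n le_rfl (j.val - 1) (by omega) h1
        refine Or.inr (Or.inl ⟨Fin.ext (by rw [Fin.val_zero]; omega), Fin.ext ?_⟩)
        rw [Fin.val_last]; omega
      · rw [if_neg hi, if_pos hj] at hxij
        have h1 : x n = x (i.val - 1) := by rw [hxn, hxij]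
        have h2 := hinj n le_rfl (i.val - 1) (by omega) h1
        refine Or.inr (Or.inr ⟨Fin.ext ?_, Fin.ext (by rw [Fin.val_zero]; omega)⟩)
        rw [Fin.val_last]; omega
      · rw [if_neg hi, if_neg hj] at hxij
        have h2 := hinj (i.val - 1) (by omega) (j.val - 1) (by omega) hxij
        exact Or.inl (Fin.ext (by omega))
    · -- edges join consecutive vertices
      intro k
      have hcs : (k.castSucc).val = k.val := rfl
      have hsc : (k.succ).val = k.val + 1 := rfl
      by_cases hk : k.val = 0
      · beta_reduce
        rw [hcs, hsc, hk, if_pos rfl, if_pos rfl, if_neg (by omega : ¬ (0 + 1 = 0))]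
        exact Or.inl ⟨rfl, by rw [show 0 + 1 - 1 = 0 by omega, hx0]⟩
      · simp only [hcs, hsc]
        rw [if_neg hk, if_neg hk, if_neg (by omega : ¬ (k.val + 1 = 0))]
        have := (hw (k.val - 1) (by omega)).2
        rw [show k.val + 1 - 1 = (k.val - 1) + 1 by omega]
        exact this

open Finset in
lemma exact_vanishes_on_nonbridge {G : WGraph}
    (hind : ∀ e : G.E, LinearIndependent ℚ
      fun f : {f : G.E // f = e ∨ WGraph.OnCommonCircuit G e f} => G.len f.1)
    {α : G.E → ℤ} (hα : G.IsExactZ α) {e₀ : G.E} (hnb : ¬ G.IsBridge e₀) :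
    α e₀ = 0 := by
  classical
  obtain ⟨f, hf⟩ := hα
  obtain ⟨N, X, ED, hcirc, k0, hk0⟩ := exists_circuit hnb
  obtain ⟨hN, hEDinj, hclosed, hvert, hjoin⟩ := hcirc
  have hcirc' : G.IsCircuit X ED := ⟨hN, hEDinj, hclosed, hvert, hjoin⟩
  have hflen : ∀ e, (α e : ℝ) * G.len e = f (G.head e) - f (G.tail e) := by
    intro e
    rw [hf e, WGraph.d, div_mul_cancel₀ _ (ne_of_gt (G.len_pos e))]
  set sgn : Fin N → ℤ := fun k => if G.tail (ED k) = X k.castSucc then 1 else -1 with hsgn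
  have step : ∀ k, (sgn k : ℝ) * ((α (ED k) : ℝ) * G.len (ED k)) =
      f (X k.succ) - f (X k.castSucc) := by
    intro k
    rcases hjoin k with ⟨ht, hh⟩ | ⟨ht, hh⟩
    · rw [hsgn]
      simp only [if_pos ht]
      rw [hflen, ht, hh]
      push_cast; ring
    · by_cases hc : G.tail (ED k) = X k.castSucc
      · have heq : X k.succ = X k.castSucc := by rw [← ht, hc]
        rw [hsgn]
        simp only [if_pos hc]
        rw [hflen, hh, hc, heq]
        push_cast; ring
      · rw [hsgn]
        simp only [if_neg hc]
        rw [hflen, ht, hh]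
        push_cast; ring
  have telescope : ∑ k : Fin N, (f (X k.succ) - f (X k.castSucc)) = 0 := by
    set g : ℕ → ℝ := fun i => if h : i ≤ N then f (X ⟨i, by omega⟩) else 0 with hg
    have h2 : ∑ k : Fin N, (f (X k.succ) - f (X k.castSucc)) =
        ∑ k : Fin N, (g (k.val + 1) - g k.val) := by
      refine Finset.sum_congr rfl fun k _ => ?_
      have e1 : g (k.val + 1) = f (X k.succ) := by
        have hle : k.val + 1 ≤ N := k.isLt
        have hfin : k.succ = (⟨k.val + 1, by omega⟩ : Fin (N + 1)) := Fin.ext rfl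
        simp only [hg]
        rw [dif_pos hle, hfin]
      have e2 : g k.val = f (X k.castSucc) := by
        have hle : k.val ≤ N := le_of_lt k.isLt
        have hfin : k.castSucc = (⟨k.val, by omega⟩ : Fin (N + 1)) := Fin.ext rfl
        simp only [hg]
        rw [dif_pos hle, hfin]
      rw [e1, e2]
    rw [h2, Fin.sum_univ_eq_sum_range (fun i => g (i + 1) - g i) N,
      Finset.sum_range_sub g N]
    have e3 : g N = f (X (Fin.last N)) := by
      have hfin : Fin.last N = (⟨N, by omega⟩ : Fin (N + 1)) := Fin.ext rfl
      simp only [hg]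
      rw [dif_pos le_rfl, hfin]
    have e4 : g 0 = f (X 0) := by
      have hfin : (0 : Fin (N + 1)) = (⟨0, by omega⟩ : Fin (N + 1)) := Fin.ext (by simp)
      simp only [hg]
      rw [dif_pos (Nat.zero_le N), hfin]
    rw [e3, e4, hclosed, sub_self]
  have total : ∑ k : Fin N, (sgn k : ℝ) * ((α (ED k) : ℝ) * G.len (ED k)) = 0 := by
    rw [Finset.sum_congr rfl fun k _ => step k, telescope]
  -- apply linear independence
  have hmem : ∀ k : Fin N, ED k = e₀ ∨ WGraph.OnCommonCircuit G e₀ (ED k) :=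
    fun k => Or.inr ⟨N, X, ED, hcirc', ⟨k0, hk0⟩, ⟨k, rfl⟩⟩
  set h : Fin N → {g : G.E // g = e₀ ∨ WGraph.OnCommonCircuit G e₀ g} :=
    fun k => ⟨ED k, hmem k⟩ with hh
  set c : {g : G.E // g = e₀ ∨ WGraph.OnCommonCircuit G e₀ g} → ℚ :=
    fun i => ∑ k ∈ univ.filter (fun k => h k = i), ((sgn k * α (ED k) : ℤ) : ℚ) with hc
  have hsum : ∑ i, c i • G.len i.1 = 0 := by
    have e5 : ∀ i, c i • G.len i.1 =
        ∑ k ∈ univ.filter (fun k => h k = i),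
          (sgn k : ℝ) * ((α (ED k) : ℝ) * G.len (ED k)) := by
      intro i
      rw [Rat.smul_def, hc]
      push_cast
      rw [Finset.sum_mul]
      refine Finset.sum_congr rfl fun k hk => ?_
      have : ED k = i.1 := by
        have := (Finset.mem_filter.mp hk).2
        rw [hh] at this
        exact congrArg Subtype.val this
      rw [this]; ring
    rw [Finset.sum_congr rfl fun i _ => e5 i,
      Finset.sum_fiberwise univ h (fun k => (sgn k : ℝ) * ((α (ED k) : ℝ) * G.len (ED k))),
      total]
  have hzero := Fintype.linearIndependent_iff.mp (hind e₀) c hsum ⟨e₀, Or.inl rfl⟩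
  have hfilter : univ.filter (fun k => h k = (⟨e₀, Or.inl rfl⟩ :
      {g : G.E // g = e₀ ∨ WGraph.OnCommonCircuit G e₀ g})) = {k0} := by
    ext k
    simp only [Finset.mem_filter, Finset.mem_univ, true_and, Finset.mem_singleton, hh]
    constructor
    · intro hk
      have : ED k = e₀ := congrArg Subtype.val hk
      exact hEDinj (this.trans hk0.symm)
    · rintro rfl
      exact Subtype.ext hk0
  simp only [hc] at hzero
  rw [hfilter, Finset.sum_singleton] at hzero
  have hint : sgn k0 * α (ED k0) = 0 := by exact_mod_cast hzero
  rw [hk0] at hint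
  rcases mul_eq_zero.mp hint with h1 | h1
  · exfalso
    simp only [hsgn] at h1
    split_ifs at h1 <;> omega
  · exact h1

/-- Reachability avoiding the edge `e₀`. -/
def Reach (G : WGraph) (e₀ : G.E) : G.V → G.V → Prop :=
  Relation.ReflTransGen (fun u v => ∃ e, e ≠ e₀ ∧ Joins G e u v)

lemma reach_symm {G : WGraph} {e₀ : G.E} {u v : G.V} (h : Reach G e₀ u v) :
    Reach G e₀ v u :=
  (@Relation.ReflTransGen.symmetric _ _
    ⟨fun _ _ hab => let ⟨e, hne, hj⟩ := hab; ⟨e, hne, hj.symm⟩⟩).symm _ _ h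

/-- The side of `e₀` containing its head. -/
def InS (G : WGraph) (e₀ : G.E) (v : G.V) : Prop := Reach G e₀ (G.head e₀) v

lemma inS_head {G : WGraph} {e₀ : G.E} : InS G e₀ (G.head e₀) :=
  Relation.ReflTransGen.refl

lemma inS_edge {G : WGraph} {e₀ g : G.E} (hne : g ≠ e₀) :
    InS G e₀ (G.tail g) ↔ InS G e₀ (G.head g) := by
  have hstep : Reach G e₀ (G.tail g) (G.head g) :=
    Relation.ReflTransGen.single ⟨g, hne, Or.inl ⟨rfl, rfl⟩⟩
  exact ⟨fun h => h.trans hstep, fun h => h.trans (reach_symm hstep)⟩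

lemma not_inS_tail {G : WGraph} (hG : G.Connected) {e₀ : G.E} (hb : G.IsBridge e₀) :
    ¬ InS G e₀ (G.tail e₀) := by
  intro h
  apply hb
  intro x y
  have key : ∀ u v : G.V, Relation.ReflTransGen G.Adj u v → Reach G e₀ u v := by
    intro u v huv
    induction huv with
    | refl => exact Relation.ReflTransGen.refl
    | @tail c w _ hcw ih =>
      obtain ⟨e, hj⟩ := hcw
      by_cases hne : e = e₀
      · subst hne
        rcases hj with ⟨ht, hh⟩ | ⟨ht, hh⟩
        · exact ih.trans (by rw [← ht, ← hh]; exact reach_symm h)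
        · exact ih.trans (by rw [← ht, ← hh]; exact h)
      · exact ih.trans (Relation.ReflTransGen.single ⟨e, hne, hj⟩)
  exact Relation.ReflTransGen.mono
    (fun u v huv => let ⟨e, hne, hj⟩ := huv; ⟨⟨e, hne⟩, hj⟩) _ _ (key x y (hG x y))

open Finset in
lemma exactZ_of_bridge_supported {G : WGraph} (hG : G.Connected) {α : G.E → ℤ}
    (hsupp : ∀ e, ¬ G.IsBridge e → α e = 0) : G.IsExactZ α := by
  classical
  refine ⟨fun v => ∑ e : G.E,
    if G.IsBridge e ∧ InS G e v then (α e : ℝ) * G.len e else 0, ?_⟩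
  intro g
  simp only [WGraph.d]
  have key : (∑ e : G.E, if G.IsBridge e ∧ InS G e (G.head g) then (α e : ℝ) * G.len e else 0)
      - (∑ e : G.E, if G.IsBridge e ∧ InS G e (G.tail g) then (α e : ℝ) * G.len e else 0)
      = (α g : ℝ) * G.len g := by
    rw [← Finset.sum_sub_distrib, Finset.sum_eq_single g]
    · by_cases hb : G.IsBridge g
      · rw [if_pos ⟨hb, inS_head⟩, if_neg (fun hA => not_inS_tail hG hb hA.2), sub_zero]
      · rw [if_neg (fun hA => hb hA.1), if_neg (fun hA => hb hA.1), hsupp g hb]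
        simp
    · intro e _ hne
      have hiff : InS G e (G.tail g) ↔ InS G e (G.head g) := inS_edge (Ne.symm hne)
      by_cases hA : G.IsBridge e ∧ InS G e (G.head g)
      · rw [if_pos hA, if_pos ⟨hA.1, hiff.mpr hA.2⟩, sub_self]
      · rw [if_neg hA, if_neg (fun hB => hA ⟨hB.1, hiff.mp hB.2⟩), sub_self]
    · intro hg
      exact absurd (Finset.mem_univ g) hg
  rw [key, mul_div_cancel_right₀ _ (ne_of_gt (G.len_pos g))]

/-- Chains supported on bridges. -/
def Bsupp (G : WGraph) : AddSubgroup (G.E → ℤ) where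
  carrier := {α | ∀ e, ¬ G.IsBridge e → α e = 0}
  add_mem' := by
    intro a b ha hb e he
    simp [Pi.add_apply, ha e he, hb e he]
  zero_mem' := fun e _ => rfl
  neg_mem' := by
    intro a ha e he
    simp [Pi.neg_apply, ha e he]

open Finset in
lemma cycleZ_iff_mem_ker {G : WGraph} (α : G.E → ℤ) :
    G.IsCycleZ α ↔ α ∈ G.dStarZHom.ker := by
  rw [AddMonoidHom.mem_ker]
  constructor
  · intro h; funext x; exact h x
  · intro h x; exact congrFun h x

open scoped Classical in
/-- The map recording the coefficients of a divisor on the head-sides of the bridges. -/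
noncomputable def psi (G : WGraph) : (G.V → ℤ) →+ ({e : G.E // G.IsBridge e} → ℤ) where
  toFun := fun D b => ∑ x ∈ Finset.univ.filter (fun x => InS G b.1 x), D x
  map_zero' := by funext b; simp
  map_add' := by
    intro a b; funext c
    simp [Finset.sum_add_distrib]

open scoped Classical in
open Finset in
lemma psi_dStarZ {G : WGraph} (hG : G.Connected) (γ : G.E → ℤ) :
    psi G (G.dStarZHom γ) = fun b => γ b.1 := by
  funext b
  show ∑ x ∈ univ.filter (fun x => InS G b.1 x), G.dStarZ γ x = γ b.1
  simp only [WGraph.dStarZ]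
  rw [Finset.sum_sub_distrib,
    Finset.sum_fiberwise_eq_sum_filter (univ : Finset G.E)
      (univ.filter (fun x => InS G b.1 x)) G.head γ,
    Finset.sum_fiberwise_eq_sum_filter (univ : Finset G.E)
      (univ.filter (fun x => InS G b.1 x)) G.tail γ]
  have hh : (univ.filter fun e => G.head e ∈ univ.filter (fun x => InS G b.1 x)) =
      univ.filter (fun e => InS G b.1 (G.head e)) := by
    apply Finset.filter_congr; intro e _; simp
  have ht : (univ.filter fun e => G.tail e ∈ univ.filter (fun x => InS G b.1 x)) =
      univ.filter (fun e => InS G b.1 (G.tail e)) := by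
    apply Finset.filter_congr; intro e _; simp
  rw [hh, ht, Finset.sum_filter, Finset.sum_filter, ← Finset.sum_sub_distrib,
    Finset.sum_eq_single b.1]
  · rw [if_pos inS_head, if_neg (not_inS_tail hG b.2), sub_zero]
  · intro e _ hne
    have hiff := inS_edge (G := G) (e₀ := b.1) (g := e) hne
    by_cases hA : InS G b.1 (G.head e)
    · rw [if_pos hA, if_pos (hiff.mpr hA), sub_self]
    · rw [if_neg hA, if_neg (fun hB => hA (hiff.mp hB)), sub_self]
  · intro hb; exact absurd (Finset.mem_univ b.1) hb

/-- The difference of two Dirac divisors. -/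
def single (G : WGraph) (x y : G.V) : G.V → ℤ :=
  fun v => (if x = v then 1 else 0) - (if y = v then 1 else 0)

open Finset in
lemma dStarZ_indicator {G : WGraph} (e : G.E) :
    G.dStarZHom (fun g => if g = e then 1 else 0) = single G (G.head e) (G.tail e) := by
  funext x
  show (∑ g ∈ univ.filter (fun g => G.head g = x), if g = e then (1:ℤ) else 0) -
    (∑ g ∈ univ.filter (fun g => G.tail g = x), if g = e then (1:ℤ) else 0) = _
  rw [Finset.sum_ite_eq' (univ.filter (fun g => G.head g = x)) e (fun _ => (1:ℤ)),
    Finset.sum_ite_eq' (univ.filter (fun g => G.tail g = x)) e (fun _ => (1:ℤ))]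
  simp [single]

lemma single_mem_range {G : WGraph} {x y : G.V}
    (h : Relation.ReflTransGen G.Adj x y) :
    single G x y ∈ G.dStarZHom.range := by
  induction h with
  | refl =>
    have : single G x x = 0 := by funext v; simp [single]
    rw [this]; exact zero_mem _
  | @tail c w _ hcw ih =>
    obtain ⟨e, hj⟩ := hcw
    have hsum : single G x w = single G x c + single G c w := by
      funext v; simp only [single, Pi.add_apply]; ring
    rw [hsum]
    refine add_mem ih ?_
    rcases hj with ⟨ht, hh⟩ | ⟨ht, hh⟩
    · -- tail = c, head = w : single c w = - single (head) (tail)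
      have : single G c w = - single G (G.head e) (G.tail e) := by
        funext v; simp only [single, Pi.neg_apply, ht, hh]; ring
      rw [this]
      exact neg_mem ⟨_, dStarZ_indicator e⟩
    · have : single G c w = single G (G.head e) (G.tail e) := by
        rw [ht, hh]
      rw [this]
      exact ⟨_, dStarZ_indicator e⟩

open Finset in
lemma dStarZ_surj {G : WGraph} (hG : G.Connected) {D : G.V → ℤ} (hD : D ∈ G.Div0) :
    ∃ γ : G.E → ℤ, G.dStarZHom γ = D := by
  classical
  cases isEmpty_or_nonempty G.V with
  | inl hV =>
    refine ⟨0, ?_⟩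
    funext v
    exact (hV.false v).elim
  | inr hV =>
    obtain ⟨z⟩ := hV
    have hrepr : D = ∑ x ∈ univ, D x • single G x z := by
      funext v
      rw [Finset.sum_apply]
      simp only [Pi.smul_apply, smul_eq_mul, single, mul_sub]
      rw [Finset.sum_sub_distrib]
      have h1 : ∑ x ∈ univ, D x * (if x = v then (1:ℤ) else 0) = D v := by
        have hx : ∀ x, D x * (if x = v then (1:ℤ) else 0) = if x = v then D x else 0 := by
          intro x; split_ifs <;> simp
        rw [Finset.sum_congr rfl (fun x _ => hx x), Finset.sum_ite_eq' univ v D]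
        simp
      have h2 : ∑ x ∈ univ, D x * (if z = v then (1:ℤ) else 0) = 0 := by
        by_cases hz : z = v
        · simp only [if_pos hz, mul_one]
          exact hD
        · simp [if_neg hz]
      rw [h1, h2, sub_zero]
    have : D ∈ G.dStarZHom.range := by
      rw [hrepr]
      exact sum_mem (fun x _ => AddSubgroup.zsmul_mem _
        (single_mem_range (hG x z)) _)
    exact this

open scoped Classical in
/-- Kill the coefficients on bridges. -/
noncomputable def killB (G : WGraph) : (G.E → ℤ) →+ (G.E → ℤ) where
  toFun := fun α g => if G.IsBridge g then 0 else α g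
  map_zero' := by funext g; simp
  map_add' := by
    intro a b; funext g
    simp only [Pi.add_apply]
    split_ifs <;> simp

lemma cycle_vanishes_on_bridge {G : WGraph} (hG : G.Connected) {α : G.E → ℤ}
    (hα : G.dStarZHom α = 0) {b : G.E} (hb : G.IsBridge b) : α b = 0 := by
  have h := congrFun (psi_dStarZ hG α) ⟨b, hb⟩
  rw [hα, map_zero] at h
  exact h.symm

lemma jacRel_eq {G : WGraph} (hG : G.Connected)
    (hind : ∀ e : G.E, LinearIndependent ℚ
      fun f : {f : G.E // f = e ∨ WGraph.OnCommonCircuit G e f} => G.len f.1) :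
    G.jacRel = G.dStarZHom.ker ⊔ Bsupp G := by
  rw [WGraph.jacRel]
  have hset : {α : G.E → ℤ | G.IsCycleZ α ∨ G.IsExactZ α} =
      ↑(G.dStarZHom.ker) ∪ ↑(Bsupp G) := by
    ext α
    simp only [Set.mem_setOf_eq, Set.mem_union, SetLike.mem_coe]
    constructor
    · rintro (h | h)
      · exact Or.inl ((cycleZ_iff_mem_ker α).mp h)
      · exact Or.inr (fun e he => exact_vanishes_on_nonbridge hind h he)
    · rintro (h | h)
      · exact Or.inl ((cycleZ_iff_mem_ker α).mpr h)
      · exact Or.inr (exactZ_of_bridge_supported hG h)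
  rw [hset, AddSubgroup.closure_union, AddSubgroup.closure_eq, AddSubgroup.closure_eq]

/-- Trivial additive equivalence between subsingleton groups. -/
def addEquivOfSubsingleton {A B : Type*} [AddGroup A] [AddGroup B]
    [Subsingleton A] [Subsingleton B] : A ≃+ B where
  toFun := fun _ => 0
  invFun := fun _ => 0
  left_inv := fun _ => Subsingleton.elim _ _
  right_inv := fun _ => Subsingleton.elim _ _
  map_add' := fun _ _ => Subsingleton.elim _ _

end WGraphAux

/-- If the edge lengths within each maximal 2-connected component
of `G` (the equivalence class of an edge under lying on a common circuit) are
`ℚ`-linearly independent, then `J(G)` is free abelian of rank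
`#V(G) - #Br(G) - 1`, where `Br(G)` is the set of bridges. -/
theorem jacobian_free_of_independent_lengths (G : WGraph) (hG : G.Connected)
    (hind : ∀ e : G.E, LinearIndependent ℚ
      fun f : {f : G.E // f = e ∨ WGraph.OnCommonCircuit G e f} => G.len f.1) :
    Nonempty (G.Jac ≃+
      (Fin (Fintype.card G.V - Nat.card {e : G.E // G.IsBridge e} - 1) → ℤ)) := by
  classical
  open WGraphAux in
  cases isEmpty_or_nonempty G.V with
  | inl hV =>
    -- degenerate case: no vertices, hence no edges
    haveI hE : IsEmpty G.E := ⟨fun e => hV.false (G.tail e)⟩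
    haveI : Unique (G.E → ℤ) := Pi.uniqueOfIsEmpty _
    haveI : Subsingleton G.Jac := by
      constructor
      intro a b
      induction a using QuotientAddGroup.induction_on with
      | H x =>
        induction b using QuotientAddGroup.induction_on with
        | H y => exact congrArg _ (Subsingleton.elim x y)
    have hcard : Fintype.card G.V = 0 := Fintype.card_eq_zero
    rw [hcard]
    have h0 : 0 - Nat.card {e : G.E // G.IsBridge e} - 1 = 0 := by omega
    rw [h0]
    haveI : IsEmpty (Fin 0) := Fin.isEmpty'
    haveI : Unique (Fin 0 → ℤ) := Pi.uniqueOfIsEmpty _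
    exact ⟨addEquivOfSubsingleton⟩
  | inr hV =>
    obtain ⟨z⟩ := hV
    -- the restricted map ρ
    set ρ : (G.E → ℤ) →+ (G.V → ℤ) := G.dStarZHom.comp (killB G) with hρdef
    have hdiv0 : ∀ γ : G.E → ℤ, G.dStarZHom γ ∈ G.Div0 := fun γ => G.sum_dStarZ γ
    set T : AddSubgroup (G.V → ℤ) := (psi G).ker ⊓ G.Div0 with hTdef
    have hkillB : ∀ (α : G.E → ℤ) (g : G.E), killB G α g = if G.IsBridge g then 0 else α g :=
      fun α g => rfl
    have hmemT : ∀ α : G.E → ℤ, ρ α ∈ T := by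
      intro α
      rw [hTdef, AddSubgroup.mem_inf]
      constructor
      · rw [AddMonoidHom.mem_ker]
        show psi G (G.dStarZHom (killB G α)) = 0
        rw [psi_dStarZ hG]
        funext b
        show (if G.IsBridge b.1 then 0 else α b.1) = 0
        rw [if_pos b.2]
      · exact hdiv0 _
    set ρ' := ρ.codRestrict T hmemT with hρ'def
    -- kernel computation
    have hker : ρ'.ker = G.jacRel := by
      rw [hρ'def, AddMonoidHom.ker_codRestrict, jacRel_eq hG hind]
      apply le_antisymm
      · intro α hα
        rw [AddMonoidHom.mem_ker] at hα
        have hsplit : α = killB G α + (fun g => if G.IsBridge g then α g else 0) := by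
          funext g
          rw [Pi.add_apply, hkillB]
          split_ifs <;> simp
        rw [hsplit]
        refine add_mem (AddSubgroup.mem_sup_left ?_) (AddSubgroup.mem_sup_right ?_)
        · rw [AddMonoidHom.mem_ker]
          exact hα
        · intro e he
          simp only [if_neg he]
      · apply sup_le
        · intro α hα
          rw [AddMonoidHom.mem_ker] at hα ⊢
          have heq : killB G α = α := by
            funext g
            rw [hkillB]
            split_ifs with hb
            · exact (cycle_vanishes_on_bridge hG hα hb).symm
            · rfl
          show G.dStarZHom (killB G α) = 0
          rw [heq, hα]
        · intro α hα
          rw [AddMonoidHom.mem_ker]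
          have heq : killB G α = 0 := by
            funext g
            rw [hkillB]
            split_ifs with hb
            · rfl
            · exact hα g hb
          show G.dStarZHom (killB G α) = 0
          rw [heq, map_zero]
    -- surjectivity
    have hsurj : Function.Surjective ρ' := by
      intro t
      have ht := AddSubgroup.mem_inf.mp (t.2)
      obtain ⟨γ, hγ⟩ := dStarZ_surj hG ht.2
      have hbr : ∀ b : G.E, G.IsBridge b → γ b = 0 := by
        intro b hb
        have h := congrFun (psi_dStarZ hG γ) ⟨b, hb⟩
        rw [hγ] at h
        rw [← h]
        have h0 := AddMonoidHom.mem_ker.mp ht.1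
        rw [h0]
        rfl
      refine ⟨γ, Subtype.ext ?_⟩
      show ρ γ = t.1
      have heq : killB G γ = γ := by
        funext g
        rw [hkillB]
        split_ifs with hb
        · exact (hbr g hb).symm
        · rfl
      show G.dStarZHom (killB G γ) = t.1
      rw [heq, hγ]
    -- quotient equivalences
    have E1 : G.Jac ≃+ ((G.E → ℤ) ⧸ ρ'.ker) :=
      QuotientAddGroup.quotientAddEquivOfEq hker.symm
    have E2 : ((G.E → ℤ) ⧸ ρ'.ker) ≃+ T :=
      QuotientAddGroup.quotientKerEquivOfSurjective ρ' hsurj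
    -- T is free: use module theory
    set M : Submodule ℤ (G.V → ℤ) := AddSubgroup.toIntSubmodule T with hMdef
    have ET : (↥T) ≃+ (↥M) :=
      { toFun := fun t => ⟨t.1, t.2⟩
        invFun := fun m => ⟨m.1, m.2⟩
        left_inv := fun _ => rfl
        right_inv := fun _ => rfl
        map_add' := fun _ _ => rfl }
    have hTfree : ∃ r : ℕ, Nonempty ((↥T) ≃+ (Fin r → ℤ)) := by
      refine ⟨Fintype.card (Module.Free.ChooseBasisIndex ℤ (↥M)), ⟨?_⟩⟩
      exact ET.trans (((Module.Free.chooseBasis ℤ (↥M)).reindex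
        (Fintype.equivFin _)).equivFun).toAddEquiv
    obtain ⟨r, ⟨ETfin⟩⟩ := hTfree
    -- rank computation via the product decomposition
    set sB : ({e : G.E // G.IsBridge e} → ℤ) → (G.V → ℤ) :=
      fun β => G.dStarZHom (fun g => if h : G.IsBridge g then β ⟨g, h⟩ else 0) with hsBdef
    have hsB_add : ∀ β₁ β₂, sB (β₁ + β₂) = sB β₁ + sB β₂ := by
      intro β₁ β₂
      have harg : (fun g => if h : G.IsBridge g then (β₁ + β₂) ⟨g, h⟩ else 0) =
          (fun g => if h : G.IsBridge g then β₁ ⟨g, h⟩ else 0) +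
          (fun g => if h : G.IsBridge g then β₂ ⟨g, h⟩ else 0) := by
        funext g
        by_cases h : G.IsBridge g
        · simp [dif_pos h]
        · simp [dif_neg h]
      simp only [hsBdef]
      rw [harg, map_add]
    have hsB_div0 : ∀ β, sB β ∈ G.Div0 := fun β => hdiv0 _
    have hpsi_sB : ∀ β, psi G (sB β) = β := by
      intro β
      rw [hsBdef, psi_dStarZ hG]
      funext b
      simp [b.2]
    have hTmem : ∀ D : G.V → ℤ, D ∈ G.Div0 → D - sB (psi G D) ∈ T := by
      intro D hD
      rw [hTdef, AddSubgroup.mem_inf]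
      constructor
      · rw [AddMonoidHom.mem_ker, map_sub, hpsi_sB, sub_self]
      · exact sub_mem hD (hsB_div0 _)
    have EP : (↥G.Div0) ≃+ (↥T × ({e : G.E // G.IsBridge e} → ℤ)) :=
      { toFun := fun D => (⟨D.1 - sB (psi G D.1), hTmem D.1 D.2⟩, psi G D.1)
        invFun := fun p => ⟨p.1.1 + sB p.2,
          add_mem (AddSubgroup.mem_inf.mp (p.1.2)).2 (hsB_div0 p.2)⟩
        left_inv := by
          intro D
          apply Subtype.ext
          show D.1 - sB (psi G D.1) + sB (psi G D.1) = D.1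
          abel
        right_inv := by
          rintro ⟨t, β⟩
          have ht0 : psi G t.1 = 0 :=
            AddMonoidHom.mem_ker.mp (AddSubgroup.mem_inf.mp (t.2)).1
          have hψ : psi G (t.1 + sB β) = β := by
            rw [map_add, ht0, hpsi_sB, zero_add]
          refine Prod.ext (Subtype.ext ?_) hψ
          show t.1 + sB β - sB (psi G (t.1 + sB β)) = t.1
          rw [hψ]
          abel
        map_add' := by
          intro D₁ D₂
          refine Prod.ext (Subtype.ext ?_) (map_add _ _ _)
          show (D₁.1 + D₂.1) - sB (psi G (D₁.1 + D₂.1)) =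
            (D₁.1 - sB (psi G D₁.1)) + (D₂.1 - sB (psi G D₂.1))
          rw [map_add, hsB_add]
          abel }
    -- Div0 is isomorphic to functions on V minus a point
    have hsum_ext : ∀ F : G.V → ℤ, ∑ v ∈ Finset.univ.erase z, F v =
        ∑ x : {x : G.V // x ≠ z}, F x.1 := by
      intro F
      rw [← Finset.sum_subtype (Finset.univ.erase z)
        (fun v => by simp [Finset.mem_erase]) F]
    set extZ : ({x : G.V // x ≠ z} → ℤ) → (G.V → ℤ) := fun g v =>
      if h : v = z then - (∑ x : {x : G.V // x ≠ z}, g x) else g ⟨v, h⟩ with hextZ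
    have hextZ_apply : ∀ g v, extZ g v =
        if h : v = z then - (∑ x : {x : G.V // x ≠ z}, g x) else g ⟨v, h⟩ :=
      fun g v => rfl
    have hextZ_div0 : ∀ g, extZ g ∈ G.Div0 := by
      intro g
      show (∑ v : G.V, extZ g v) = 0
      rw [← Finset.add_sum_erase Finset.univ _ (Finset.mem_univ z), hsum_ext (extZ g),
        hextZ_apply, dif_pos rfl]
      have hsub : ∑ x : {x : G.V // x ≠ z}, extZ g x.1 =
          ∑ x : {x : G.V // x ≠ z}, g x := by
        refine Finset.sum_congr rfl fun x _ => ?_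
        rw [hextZ_apply, dif_neg x.2]
      rw [hsub]
      abel
    have EZ : (↥G.Div0) ≃+ ({x : G.V // x ≠ z} → ℤ) :=
      { toFun := fun D x => D.1 x.1
        invFun := fun g => ⟨extZ g, hextZ_div0 g⟩
        left_inv := by
          intro D
          apply Subtype.ext
          funext v
          show extZ (fun x => D.1 x.1) v = D.1 v
          rw [hextZ_apply]
          split_ifs with h
          · subst h
            have hD : (∑ x : G.V, D.1 x) = 0 := D.2
            rw [← Finset.add_sum_erase Finset.univ _ (Finset.mem_univ v),
              hsum_ext D.1] at hD
            omega
          · rfl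
        right_inv := by
          intro g
          funext x
          show extZ g x.1 = g x
          rw [hextZ_apply, dif_neg x.2]
        map_add' := fun _ _ => rfl }
    -- compute the rank
    have L1 : ((Fin r → ℤ) × ({e : G.E // G.IsBridge e} → ℤ)) ≃+ ({x : G.V // x ≠ z} → ℤ) :=
      (AddEquiv.prodCongr ETfin.symm (AddEquiv.refl _)).trans (EP.symm.trans EZ)
    have hfr := LinearEquiv.finrank_eq L1.toIntLinearEquiv
    rw [Module.finrank_prod, Module.finrank_pi, Module.finrank_pi, Module.finrank_pi] at hfr
    have hcardV : Fintype.card {x : G.V // x ≠ z} = Fintype.card G.V - 1 := by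
      rw [Fintype.card_subtype_compl, Fintype.card_subtype_eq]
    haveI : Nonempty G.V := ⟨z⟩
    have hposV : 0 < Fintype.card G.V := Fintype.card_pos
    rw [Fintype.card_fin, hcardV] at hfr
    have hNat : Nat.card {e : G.E // G.IsBridge e} = Fintype.card {e : G.E // G.IsBridge e} :=
      Nat.card_eq_fintype_card
    have hr : Fintype.card G.V - Nat.card {e : G.E // G.IsBridge e} - 1 = r := by
      rw [hNat]
      omega
    rw [hr]
    exact ⟨E1.trans (E2.trans ETfin)⟩
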